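/- Assume E(|u|²) < ∞ μ-a.e. and set S = {x ∈ X : E(|u|²)(x) > 0}. Then for every f ∈ D(EM_u): (1) EM_u f = 0 μ-a.e. on X ∖ S; and (2) ∫_S E(|u|²)^{-1}·|u|²·|EM_u f|² dμ = ∫_X |EM_u f|² dμ. (This is the identity ‖M_{u'}EM_u f‖₂ = ‖|EM_u| f‖₂ with u' = E(|u|²)^{-1/2}·χ_S·ū, underlying the description of the modulus in the polar decomposition of EM_u.) -/

import Mathlib

open MeasureTheory Filter ENNReal NNReal

noncomputable section

variable {X : Type*}

/-- A set `A` in the sub-σ-algebra `m` is *admissible* for the weight `u` if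
`μ A + ∫_A |u|² dμ < ∞`. -/
def Admissible (m : MeasurableSpace X) [m0 : MeasurableSpace X] (μ : Measure X)
    (u : X → ℂ) (A : Set X) : Prop :=
  MeasurableSet[m] A ∧ μ A + ∫⁻ x in A, (‖u x‖₊ : ℝ≥0∞) ^ 2 ∂μ < ⊤

/-- `gf` is a version of `E(u·f)`, i.e. `gf` is an `m`-measurable function in `L²(μ)` with
`∫_A u·f dμ = ∫_A gf dμ` for every admissible `A`.  `f ∈ D(EM_u)` iff `f ∈ L²(μ)` and such a
`gf` exists. -/
def IsWCE (m : MeasurableSpace X) [m0 : MeasurableSpace X] (μ : Measure X)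
    (u f gf : X → ℂ) : Prop :=
  StronglyMeasurable[m] gf ∧ MemLp gf 2 μ ∧
    ∀ A : Set X, Admissible m μ u A → ∫ x in A, u x * f x ∂μ = ∫ x in A, gf x ∂μ

/-- With `E(|u|²) < ∞` a.e. and `S = {E(|u|²) > 0}`, for every `f ∈ D(EM_u)`:
(1) `EM_u f = 0` a.e. off `S`; (2) `∫_S E(|u|²)⁻¹·|u|²·|EM_u f|² dμ = ∫ |EM_u f|² dμ`. -/
theorem stmt9 (m : MeasurableSpace X) [m0 : MeasurableSpace X] (hm : m ≤ m0)
    (μ : Measure X) [SigmaFinite μ] [SigmaFinite (μ.trim hm)]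
    (u : X → ℂ) (hu : Measurable u)
    (g : X → ℝ≥0∞) (hgm : Measurable[m] g)
    (hg : ∀ A : Set X, MeasurableSet[m] A →
      ∫⁻ x in A, (‖u x‖₊ : ℝ≥0∞) ^ 2 ∂μ = ∫⁻ x in A, g x ∂μ)
    (hgfin : ∀ᵐ x ∂μ, g x < ⊤)
    (f gf : X → ℂ) (hf : MemLp f 2 μ) (hgf : IsWCE m μ u f gf) :
    (∀ᵐ x ∂μ, g x = 0 → gf x = 0) ∧
    ∫⁻ x in {x | 0 < g x}, (g x)⁻¹ * (‖u x‖₊ : ℝ≥0∞) ^ 2 * (‖gf x‖₊ : ℝ≥0∞) ^ 2 ∂μ =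
      ∫⁻ x, (‖gf x‖₊ : ℝ≥0∞) ^ 2 ∂μ := by
  obtain ⟨hgf_sm, hgf_L2, hgf_int⟩ := hgf
  set Z : Set X := {x | g x = 0} with hZdef
  have hZ : MeasurableSet[m] Z := hgm (measurableSet_singleton 0)
  have hZ0 : MeasurableSet Z := hm _ hZ
  have hgZ : ∀ s : Set X, s ⊆ Z → ∫⁻ x in s, g x ∂μ = 0 := by
    intro s hs
    refine le_antisymm ?_ zero_le
    calc ∫⁻ x in s, g x ∂μ ≤ ∫⁻ x in Z, g x ∂μ := lintegral_mono_set hs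
      _ = ∫⁻ x in Z, 0 ∂μ := setLIntegral_congr_fun hZ0 (fun x hx => hx)
      _ = 0 := by simp
  have huZ : ∀ᵐ x ∂μ.restrict Z, u x = 0 := by
    have hw : Measurable fun x => (‖u x‖₊ : ℝ≥0∞) ^ 2 :=
      (hu.nnnorm.coe_nnreal_ennreal).pow_const 2
    have h1 : ∫⁻ x in Z, (‖u x‖₊ : ℝ≥0∞) ^ 2 ∂μ = 0 := by
      rw [hg Z hZ]; exact hgZ Z subset_rfl
    have h2 := (lintegral_eq_zero_iff hw).mp h1
    filter_upwards [h2] with x hx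
    simpa using hx
  -- Part 1
  have part1 : ∀ᵐ x ∂μ.restrict Z, gf x = 0 := by
    set ν := μ.restrict Z with hν
    haveI : SigmaFinite (ν.trim hm) := by
      rw [hν, ← restrict_trim hm μ hZ]; infer_instance
    have hint : ∀ s : Set X, MeasurableSet[m] s → (ν.trim hm) s < ⊤ →
        μ (s ∩ Z) < ⊤ ∧ Admissible m μ u (s ∩ Z) := by
      intro s hs hsfin
      have hμs : μ (s ∩ Z) < ⊤ := by
        rwa [trim_measurableSet_eq hm hs, hν, Measure.restrict_apply (hm s hs)] at hsfin
      refine ⟨hμs, ⟨hs.inter hZ, ?_⟩⟩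
      have : ∫⁻ x in s ∩ Z, (‖u x‖₊ : ℝ≥0∞) ^ 2 ∂μ = 0 := by
        rw [hg _ (hs.inter hZ)]; exact hgZ _ Set.inter_subset_right
      rw [this, add_zero]; exact hμs
    have key : gf =ᵐ[ν.trim hm] 0 := by
      refine ae_eq_zero_of_forall_setIntegral_eq_of_sigmaFinite (fun s hs hsfin => ?_)
        (fun s hs hsfin => ?_)
      · obtain ⟨hμs, _⟩ := hint s hs hsfin
        haveI : IsFiniteMeasure (μ.restrict (s ∩ Z)) :=
          ⟨by rwa [Measure.restrict_apply_univ]⟩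
        have hintμ : Integrable gf (μ.restrict (s ∩ Z)) :=
          (hgf_L2.restrict _).integrable one_le_two
        have hintν : Integrable gf (ν.restrict s) := by
          rw [hν, Measure.restrict_restrict (hm s hs)]
          exact hintμ
        have h2 := Integrable.trim hm hintν hgf_sm
        rw [← restrict_trim hm ν hs] at h2
        exact h2
      · obtain ⟨hμs, hadm⟩ := hint s hs hsfin
        have h0 : ∫ x in s ∩ Z, u x * f x ∂μ = 0 := by
          have : ∀ᵐ x ∂μ.restrict (s ∩ Z), u x * f x = 0 := by
            have hle : ∀ᵐ x ∂μ.restrict (s ∩ Z), u x = 0 :=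
              ae_mono (Measure.restrict_mono Set.inter_subset_right le_rfl) huZ
            filter_upwards [hle] with x hx
            rw [hx, zero_mul]
          exact integral_eq_zero_of_ae this
        have := hgf_int _ hadm
        rw [h0] at this
        calc ∫ x in s, gf x ∂(ν.trim hm)
            = ∫ x, gf x ∂((ν.restrict s).trim hm) := by rw [← restrict_trim hm ν hs]
          _ = ∫ x, gf x ∂(ν.restrict s) := (integral_trim hm hgf_sm).symm
          _ = ∫ x in s ∩ Z, gf x ∂μ := by rw [hν, Measure.restrict_restrict (hm s hs)]
          _ = 0 := this.symm
    exact ae_eq_of_ae_eq_trim key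
  have part1' : ∀ᵐ x ∂μ, g x = 0 → gf x = 0 := (ae_restrict_iff' hZ0).mp part1
  refine ⟨part1', ?_⟩
  -- Part 2
  set S : Set X := {x | 0 < g x} with hSdef
  have hS : MeasurableSet[m] S := hgm measurableSet_Ioi
  have hS0 : MeasurableSet S := hm _ hS
  have hgm0 : Measurable g := hgm.mono hm le_rfl
  have hgf1 : Measurable[m] gf := hgf_sm.measurable
  have hgf2 : Measurable[m] fun x => ‖gf x‖₊ := measurable_nnnorm.comp hgf1
  have hgf3 : Measurable[m] fun x => (‖gf x‖₊ : ℝ≥0∞) := measurable_coe_nnreal_ennreal.comp hgf2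
  have hgfmeas : Measurable[m] fun x => (‖gf x‖₊ : ℝ≥0∞) ^ 2 := hgf3.pow_const 2
  have hw : Measurable fun x => (‖u x‖₊ : ℝ≥0∞) ^ 2 :=
    (hu.nnnorm.coe_nnreal_ennreal).pow_const 2
  have key : ∀ φ : X → ℝ≥0∞, Measurable[m] φ →
      ∫⁻ x, φ x * (‖u x‖₊ : ℝ≥0∞) ^ 2 ∂μ = ∫⁻ x, φ x * g x ∂μ := by
    intro φ hφ
    have hφ0 : Measurable φ := hφ.mono hm le_rfl
    have htrim : (μ.withDensity fun x => (‖u x‖₊ : ℝ≥0∞) ^ 2).trim hm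
        = (μ.withDensity g).trim hm := by
      refine @Measure.ext X m _ _ fun s hs => ?_
      rw [trim_measurableSet_eq hm hs, trim_measurableSet_eq hm hs,
        withDensity_apply _ (hm s hs), withDensity_apply _ (hm s hs)]
      exact hg s hs
    calc ∫⁻ x, φ x * (‖u x‖₊ : ℝ≥0∞) ^ 2 ∂μ
        = ∫⁻ x, ((fun x => (‖u x‖₊ : ℝ≥0∞) ^ 2) * φ) x ∂μ :=
          lintegral_congr fun x => mul_comm _ _
      _ = ∫⁻ x, φ x ∂(μ.withDensity fun x => (‖u x‖₊ : ℝ≥0∞) ^ 2) :=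
          (lintegral_withDensity_eq_lintegral_mul μ hw hφ0).symm
      _ = ∫⁻ x, φ x ∂((μ.withDensity fun x => (‖u x‖₊ : ℝ≥0∞) ^ 2).trim hm) :=
          (lintegral_trim hm hφ).symm
      _ = ∫⁻ x, φ x ∂((μ.withDensity g).trim hm) := by rw [htrim]
      _ = ∫⁻ x, φ x ∂(μ.withDensity g) := lintegral_trim hm hφ
      _ = ∫⁻ x, (g * φ) x ∂μ := lintegral_withDensity_eq_lintegral_mul μ hgm0 hφ0
      _ = ∫⁻ x, φ x * g x ∂μ := lintegral_congr fun x => mul_comm _ _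
  set φ : X → ℝ≥0∞ := S.indicator fun x => (g x)⁻¹ * (‖gf x‖₊ : ℝ≥0∞) ^ 2 with hφdef
  have hginv : Measurable[m] fun x => (g x)⁻¹ := hgm.inv
  have hprod : Measurable[m] fun x => (g x)⁻¹ * (‖gf x‖₊ : ℝ≥0∞) ^ 2 := hginv.mul hgfmeas
  have hφm : Measurable[m] φ := hprod.indicator hS
  have step1 : ∫⁻ x in S, (g x)⁻¹ * (‖u x‖₊ : ℝ≥0∞) ^ 2 * (‖gf x‖₊ : ℝ≥0∞) ^ 2 ∂μ
      = ∫⁻ x, φ x * (‖u x‖₊ : ℝ≥0∞) ^ 2 ∂μ := by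
    rw [← lintegral_indicator hS0]
    refine lintegral_congr fun x => ?_
    by_cases hx : x ∈ S
    · simp only [hφdef, Set.indicator_of_mem hx]
      ring
    · simp [hφdef, Set.indicator_of_notMem hx]
  have step2 : ∫⁻ x, φ x * g x ∂μ = ∫⁻ x in S, (‖gf x‖₊ : ℝ≥0∞) ^ 2 ∂μ := by
    have : ∀ x, φ x * g x
        = S.indicator (fun x => (g x)⁻¹ * (‖gf x‖₊ : ℝ≥0∞) ^ 2 * g x) x := by
      intro x
      by_cases hx : x ∈ S
      · simp [hφdef, Set.indicator_of_mem hx]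
      · simp [hφdef, Set.indicator_of_notMem hx]
    rw [lintegral_congr this, lintegral_indicator hS0]
    refine lintegral_congr_ae ?_
    filter_upwards [ae_restrict_of_ae hgfin, ae_restrict_mem hS0] with x hxfin hxS
    have h0 : g x ≠ 0 := ne_of_gt hxS
    rw [mul_comm ((g x)⁻¹) _, mul_assoc, ENNReal.inv_mul_cancel h0 hxfin.ne, mul_one]
  have step3 : ∫⁻ x in S, (‖gf x‖₊ : ℝ≥0∞) ^ 2 ∂μ = ∫⁻ x, (‖gf x‖₊ : ℝ≥0∞) ^ 2 ∂μ := by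
    have hSc : Sᶜ = Z := by
      ext x; simp [hSdef, hZdef, pos_iff_ne_zero]
    have hcompl : ∫⁻ x in Sᶜ, (‖gf x‖₊ : ℝ≥0∞) ^ 2 ∂μ = 0 := by
      rw [hSc]
      refine le_antisymm ?_ zero_le
      have : ∀ᵐ x ∂μ.restrict Z, (‖gf x‖₊ : ℝ≥0∞) ^ 2 = 0 := by
        filter_upwards [part1] with x hx; simp [hx]
      rw [lintegral_congr_ae this]; simp
    conv_rhs => rw [← lintegral_add_compl _ hS0]
    rw [hcompl, add_zero]
  rw [step1, key φ hφm, step2, step3]
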